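/- For a udKdV solution with V^t > 1, define X^t_i = ∑_{j≥i}(U^{t+1}_j − U^{t−1}_j) and Y^t_i = ∑_{j>i} U^t_j − ∑_{j≥i} U^{t−1}_j. Then max_i X^t_i = 1 + max_i Y^t_i. -/

import Mathlib

open Set Function

lemma aux_Ioi_eq (i : ℤ) : Set.Ioi i = Set.Ici (i + 1) := by
  ext j; simp only [Set.mem_Ioi, Set.mem_Ici]; omega

lemma aux_sub (f g : ℤ → ℝ) (hf : (support f).Finite) (hg : (support g).Finite) (s : Set ℤ) :
    ∑ᶠ j ∈ s, (f j - g j) = (∑ᶠ j ∈ s, f j) - ∑ᶠ j ∈ s, g j := by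
  set u : Set ℤ := support f ∪ support g with hu
  have hufin : u.Finite := hf.union hg
  have h1 : ∑ᶠ j ∈ s, (f j - g j) = ∑ᶠ j ∈ s ∩ u, (f j - g j) := by
    refine (finsum_mem_inter_support_eq _ _ _ ?_).symm
    ext x
    constructor
    · rintro ⟨⟨hs, hun⟩, hsup⟩; exact ⟨hs, hsup⟩
    · rintro ⟨hs, hsup⟩
      refine ⟨⟨hs, ?_⟩, hsup⟩
      by_contra h
      simp only [hu, Set.mem_union, mem_support, not_or, not_not] at h
      simp [mem_support, h.1, h.2] at hsup
  have h2 : ∑ᶠ j ∈ s, f j = ∑ᶠ j ∈ s ∩ u, f j := by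
    refine (finsum_mem_inter_support_eq _ _ _ ?_).symm
    ext x
    constructor
    · rintro ⟨⟨hs, _⟩, hsup⟩; exact ⟨hs, hsup⟩
    · rintro ⟨hs, hsup⟩; exact ⟨⟨hs, Or.inl hsup⟩, hsup⟩
  have h3 : ∑ᶠ j ∈ s, g j = ∑ᶠ j ∈ s ∩ u, g j := by
    refine (finsum_mem_inter_support_eq _ _ _ ?_).symm
    ext x
    constructor
    · rintro ⟨⟨hs, _⟩, hsup⟩; exact ⟨hs, hsup⟩
    · rintro ⟨hs, hsup⟩; exact ⟨⟨hs, Or.inr hsup⟩, hsup⟩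
  rw [h1, h2, h3, finsum_mem_sub_distrib f g (hufin.inter_of_right s)]

lemma aux_split (f : ℤ → ℝ) (hf : (support f).Finite) (i : ℤ) :
    ∑ᶠ j ∈ Set.Ici i, f j = f i + ∑ᶠ j ∈ Set.Ici (i + 1), f j := by
  have h : Set.Ici i = insert i (Set.Ici (i + 1)) := by
    ext j; simp only [Set.mem_Ici, Set.mem_insert_iff]; omega
  rw [h, finsum_mem_insert' f (by simp) (hf.inter_of_right _)]

lemma aux_total (f : ℤ → ℝ) (hf : (support f).Finite) (i : ℤ) :
    ∑ᶠ j, f j = (∑ᶠ j ∈ Set.Iio i, f j) + ∑ᶠ j ∈ Set.Ici i, f j := by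
  rw [← finsum_mem_univ, ← Set.Iio_union_Ici (a := i),
    finsum_mem_union' (Set.Iio_disjoint_Ici le_rfl) (hf.inter_of_right _) (hf.inter_of_right _)]

lemma aux_vanish (f : ℤ → ℝ) {s : Set ℤ} (h : ∀ j ∈ s, f j = 0) :
    ∑ᶠ j ∈ s, f j = 0 :=
  finsum_mem_eq_zero_of_forall_eq_zero h

lemma aux_min_zero {c : ℝ} (h : min 1 c = 0) : c = 0 := by
  rcases le_total (1 : ℝ) c with h' | h'
  · rw [min_eq_left h'] at h; linarith
  · rwa [min_eq_right h'] at h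


/-- For a finitely supported udKdV solution with `V^t > 1`,
defining `X^t_i = ∑_{j≥i}(U^{t+1}_j − U^{t−1}_j)` and
`Y^t_i = ∑_{j>i} U^t_j − ∑_{j≥i} U^{t−1}_j`, one has
`max_i X^t_i = 1 + max_i Y^t_i`. -/
theorem stmt_7 (U : ℤ → ℤ → ℝ)
    (hfin : ∀ t, (Function.support (U t)).Finite)
    (hup : ∀ t i, U (t + 1) i =
      min (1 - U t i) (∑ᶠ j ∈ Set.Iio i, (U t j - U (t + 1) j)))
    (hdown : ∀ t i, U (t - 1) i =
      min (1 - U t i) (∑ᶠ j ∈ Set.Ioi i, (U t j - U (t - 1) j)))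
    (X Y : ℤ → ℤ → ℝ)
    (hX : ∀ t i, X t i = ∑ᶠ j ∈ Set.Ici i, (U (t + 1) j - U (t - 1) j))
    (hY : ∀ t i, Y t i = (∑ᶠ j ∈ Set.Ioi i, U t j) - ∑ᶠ j ∈ Set.Ici i, U (t - 1) j)
    (t : ℤ) (hV : 1 < ⨆ i : ℤ, (U t i + U t (i + 1))) :
    (⨆ i : ℤ, X t i) = 1 + ⨆ i : ℤ, Y t i := by
  classical
  obtain ⟨A, hA⟩ : ∃ A : ℤ → ℝ, ∀ i, A i = ∑ᶠ j ∈ Set.Ici i, U (t + 1) j := ⟨_, fun _ => rfl⟩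
  obtain ⟨B, hB⟩ : ∃ B : ℤ → ℝ, ∀ i, B i = ∑ᶠ j ∈ Set.Ici i, U t j := ⟨_, fun _ => rfl⟩
  obtain ⟨C, hC⟩ : ∃ C : ℤ → ℝ, ∀ i, C i = ∑ᶠ j ∈ Set.Ici i, U (t - 1) j := ⟨_, fun _ => rfl⟩
  obtain ⟨TA, hTA⟩ : ∃ r : ℝ, r = ∑ᶠ j, U (t + 1) j := ⟨_, rfl⟩
  obtain ⟨TB, hTB⟩ : ∃ r : ℝ, r = ∑ᶠ j, U t j := ⟨_, rfl⟩
  obtain ⟨TC, hTC⟩ : ∃ r : ℝ, r = ∑ᶠ j, U (t - 1) j := ⟨_, rfl⟩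
  have hsplitA : ∀ i, A i = U (t + 1) i + A (i + 1) := fun i => by
    rw [hA, hA]; exact aux_split _ (hfin _) i
  have hsplitB : ∀ i, B i = U t i + B (i + 1) := fun i => by
    rw [hB, hB]; exact aux_split _ (hfin _) i
  have hsplitC : ∀ i, C i = U (t - 1) i + C (i + 1) := fun i => by
    rw [hC, hC]; exact aux_split _ (hfin _) i
  -- support bounds
  have hub : ∀ s : ℤ, ∃ N : ℤ, ∀ j : ℤ, N ≤ j → U s j = 0 := by
    intro s
    obtain ⟨b, hb⟩ := (hfin s).bddAbove
    refine ⟨b + 1, fun j hj => ?_⟩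
    by_contra h
    have := hb (Function.mem_support.mpr h)
    have this : j ≤ b := this
    omega
  have hlb : ∀ s : ℤ, ∃ N : ℤ, ∀ j : ℤ, j ≤ N → U s j = 0 := by
    intro s
    obtain ⟨b, hb⟩ := (hfin s).bddBelow
    refine ⟨b - 1, fun j hj => ?_⟩
    by_contra h
    have := hb (Function.mem_support.mpr h)
    have this : b ≤ j := this
    omega
  obtain ⟨N1, hN1⟩ := hub (t + 1)
  obtain ⟨N2, hN2⟩ := hub t
  obtain ⟨N3, hN3⟩ := hub (t - 1)
  obtain ⟨L1, hL1⟩ := hlb (t + 1)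
  obtain ⟨L2, hL2⟩ := hlb t
  obtain ⟨L3, hL3⟩ := hlb (t - 1)
  set N : ℤ := max (max N1 N2) N3 with hNdef
  set L : ℤ := min (min L1 L2) L3 with hLdef
  have hNz : ∀ j, N ≤ j → U (t + 1) j = 0 ∧ U t j = 0 ∧ U (t - 1) j = 0 := by
    intro j hj
    have e1 : N1 ≤ N := le_trans (le_max_left _ _) (le_max_left _ _)
    have e2 : N2 ≤ N := le_trans (le_max_right _ _) (le_max_left _ _)
    have e3 : N3 ≤ N := le_max_right _ _
    exact ⟨hN1 j (by omega), hN2 j (by omega), hN3 j (by omega)⟩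
  have hLz : ∀ j, j ≤ L → U (t + 1) j = 0 ∧ U t j = 0 ∧ U (t - 1) j = 0 := by
    intro j hj
    have e1 : L ≤ L1 := le_trans (min_le_left _ _) (min_le_left _ _)
    have e2 : L ≤ L2 := le_trans (min_le_left _ _) (min_le_right _ _)
    have e3 : L ≤ L3 := min_le_right _ _
    exact ⟨hL1 j (by omega), hL2 j (by omega), hL3 j (by omega)⟩
  have hAz : ∀ i, N ≤ i → A i = 0 := fun i hi => by
    rw [hA]; exact aux_vanish _ fun j hj => (hNz j (le_trans hi hj)).1
  have hBz : ∀ i, N ≤ i → B i = 0 := fun i hi => by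
    rw [hB]; exact aux_vanish _ fun j hj => (hNz j (le_trans hi hj)).2.1
  have hCz : ∀ i, N ≤ i → C i = 0 := fun i hi => by
    rw [hC]; exact aux_vanish _ fun j hj => (hNz j (le_trans hi hj)).2.2
  have hAfull : ∀ i, i ≤ L + 1 → A i = TA := by
    intro i hi
    have h := aux_total (U (t + 1)) (hfin _) i
    rw [← hA i, ← hTA] at h
    have hz : ∑ᶠ j ∈ Set.Iio i, U (t + 1) j = 0 :=
      aux_vanish _ fun j hj => (hLz j (by simp only [Set.mem_Iio] at hj; omega)).1
    linarith
  have hBfull : ∀ i, i ≤ L + 1 → B i = TB := by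
    intro i hi
    have h := aux_total (U t) (hfin _) i
    rw [← hB i, ← hTB] at h
    have hz : ∑ᶠ j ∈ Set.Iio i, U t j = 0 :=
      aux_vanish _ fun j hj => (hLz j (by simp only [Set.mem_Iio] at hj; omega)).2.1
    linarith
  have hCfull : ∀ i, i ≤ L + 1 → C i = TC := by
    intro i hi
    have h := aux_total (U (t - 1)) (hfin _) i
    rw [← hC i, ← hTC] at h
    have hz : ∑ᶠ j ∈ Set.Iio i, U (t - 1) j = 0 :=
      aux_vanish _ fun j hj => (hLz j (by simp only [Set.mem_Iio] at hj; omega)).2.2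
    linarith
  -- rewritten update rules
  have hdownt : ∀ i, U (t - 1) i = min (1 - U t i) (B (i + 1) - C (i + 1)) := by
    intro i
    have h := hdown t i
    rwa [aux_sub _ _ (hfin _) (hfin _), aux_Ioi_eq, ← hB (i + 1), ← hC (i + 1)] at h
  have hdownt1 : ∀ i, U t i = min (1 - U (t + 1) i) (A (i + 1) - B (i + 1)) := by
    intro i
    have h := hdown (t + 1) i
    simp only [add_sub_cancel_right] at h
    rwa [aux_sub _ _ (hfin _) (hfin _), aux_Ioi_eq, ← hA (i + 1), ← hB (i + 1)] at h
  have hupt : ∀ i, U (t + 1) i = min (1 - U t i) ((TB - B i) - (TA - A i)) := by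
    intro i
    have h := hup t i
    rw [aux_sub _ _ (hfin _) (hfin _)] at h
    have e1 : ∑ᶠ j ∈ Set.Iio i, U t j = TB - B i := by
      have h2 := aux_total (U t) (hfin _) i
      rw [← hB i, ← hTB] at h2; linarith
    have e2 : ∑ᶠ j ∈ Set.Iio i, U (t + 1) j = TA - A i := by
      have h2 := aux_total (U (t + 1)) (hfin _) i
      rw [← hA i, ← hTA] at h2; linarith
    rwa [e1, e2] at h
  -- mass conservation
  have massBC : TB = TC := by
    have h := hdownt (L - 1)
    rw [show L - 1 + 1 = L from by ring] at h
    rw [(hLz (L - 1) (by omega)).2.2, (hLz (L - 1) (by omega)).2.1,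
      hBfull L (by omega), hCfull L (by omega), sub_zero] at h
    have := aux_min_zero h.symm
    linarith
  have massAB : TA = TB := by
    have h := hupt N
    rw [(hNz N le_rfl).1, (hNz N le_rfl).2.1, hAz N le_rfl, hBz N le_rfl, sub_zero,
      sub_zero, sub_zero] at h
    have := aux_min_zero h.symm
    linarith
  have hupt' : ∀ i, U (t + 1) i = min (1 - U t i) (A i - B i) := by
    intro i
    have h := hupt i
    have e : (TB - B i) - (TA - A i) = A i - B i := by rw [massAB]; ring
    rwa [e] at h
  -- basic inequalities
  have f1 : ∀ i, U t i + U (t - 1) i ≤ 1 := fun i => by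
    have h := hdownt i
    have h2 := min_le_left (1 - U t i) (B (i + 1) - C (i + 1))
    linarith
  have f2 : ∀ i, U (t - 1) i ≤ B (i + 1) - C (i + 1) := fun i => by
    have h := hdownt i
    have h2 := min_le_right (1 - U t i) (B (i + 1) - C (i + 1))
    linarith
  have f3 : ∀ i, U t i ≤ A (i + 1) - B (i + 1) := fun i => by
    have h := hdownt1 i
    have h2 := min_le_right (1 - U (t + 1) i) (A (i + 1) - B (i + 1))
    linarith
  have hX' : ∀ i, X t i = A i - C i := fun i => by
    rw [hX, aux_sub _ _ (hfin _) (hfin _), ← hA i, ← hC i]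
  have hY' : ∀ i, Y t i = B (i + 1) - C i := fun i => by
    rw [hY, aux_Ioi_eq, ← hB (i + 1), ← hC i]
  have hYz : ∀ i, (N ≤ i ∨ i ≤ L - 1) → Y t i = 0 := by
    rintro i (hi | hi)
    · rw [hY' i, hBz (i + 1) (by omega), hCz i hi]; ring
    · rw [hY' i, hBfull (i + 1) (by omega), hCfull i (by omega), massBC]; ring
  have hXz : ∀ i, (N ≤ i ∨ i ≤ L) → X t i = 0 := by
    rintro i (hi | hi)
    · rw [hX' i, hAz i hi, hCz i hi]; ring
    · rw [hX' i, hAfull i (by omega), hCfull i (by omega), massAB, massBC]; ring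
  have hYfin : (Set.range (Y t)).Finite := by
    apply Set.Finite.subset (((Set.finite_Icc L N).image (Y t)).insert 0)
    rintro _ ⟨i, rfl⟩
    by_cases hi : L ≤ i ∧ i ≤ N
    · exact Set.mem_insert_of_mem _ ⟨i, Set.mem_Icc.mpr hi, rfl⟩
    · rw [hYz i (by omega)]; exact Set.mem_insert _ _
  have hXfin : (Set.range (X t)).Finite := by
    apply Set.Finite.subset (((Set.finite_Icc L N).image (X t)).insert 0)
    rintro _ ⟨i, rfl⟩
    by_cases hi : L ≤ i ∧ i ≤ N
    · exact Set.mem_insert_of_mem _ ⟨i, Set.mem_Icc.mpr hi, rfl⟩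
    · rw [hXz i (by omega)]; exact Set.mem_insert _ _
  have hYbdd : BddAbove (Set.range (Y t)) := hYfin.bddAbove
  have hXbdd : BddAbove (Set.range (X t)) := hXfin.bddAbove
  have hYle : ∀ i, Y t i ≤ ⨆ i, Y t i := fun i => le_ciSup hYbdd i
  -- positivity of sup Y
  obtain ⟨i₀, hi₀⟩ : ∃ i, 1 < U t i + U t (i + 1) := by
    by_contra h
    push_neg at h
    have : (⨆ i, (U t i + U t (i + 1))) ≤ 1 := ciSup_le h
    linarith
  have hM0 : 0 < ⨆ i, Y t i := by
    have h1 : Y t i₀ = (B (i₀ + 1) - C (i₀ + 1)) - U (t - 1) i₀ := by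
      rw [hY' i₀, hsplitC i₀]; ring
    have h2 := hsplitB (i₀ + 1)
    have h3 := hsplitC (i₀ + 1)
    have h4 := f2 (i₀ + 1)
    have h5 := f1 i₀
    have : 0 < Y t i₀ := by linarith
    exact lt_of_lt_of_le this (hYle i₀)
  have f4 : ∀ i, 0 < Y t i → U t i + U (t - 1) i = 1 := by
    intro i hpos
    have hy : Y t i = (B (i + 1) - C (i + 1)) - U (t - 1) i := by
      rw [hY' i, hsplitC i]; ring
    rcases le_total (1 - U t i) (B (i + 1) - C (i + 1)) with h | h
    · have h2 := hdownt i; rw [min_eq_left h] at h2; linarith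
    · have h2 := hdownt i; rw [min_eq_right h] at h2; linarith
  -- upper bound: ∀ i, X t i ≤ 1 + sup Y
  have step : ∀ i, X t i ≤ 1 + ⨆ i, Y t i → X t (i + 1) ≤ 1 + ⨆ i, Y t i := by
    intro i hIH
    have hXd : X t (i + 1) = X t i + U (t - 1) i - U (t + 1) i := by
      rw [hX' i, hX' (i + 1), hsplitA i, hsplitC i]; ring
    have hx := hX' i
    rcases min_cases (1 - U t i) (A i - B i) with ⟨hmin, _⟩ | ⟨hmin, _⟩
    · have h2 := hupt' i; rw [hmin] at h2
      have h3 := f1 i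
      linarith
    · have h2 := hupt' i; rw [hmin] at h2
      have h3 := hsplitB i
      have h4 := hY' i
      have h5 := f1 i
      have h6 := hYle i
      linarith
  have key : ∀ i, X t i ≤ 1 + ⨆ i, Y t i := by
    have base : ∀ i, i ≤ L → X t i ≤ 1 + ⨆ i, Y t i := fun i hi => by
      rw [hXz i (Or.inr hi)]; linarith
    have hn : ∀ n : ℕ, X t (L + n) ≤ 1 + ⨆ i, Y t i := by
      intro n
      induction n with
      | zero => simpa using base L le_rfl
      | succ k ih =>
        have e : (L + ((k + 1 : ℕ) : ℤ)) = (L + (k : ℕ)) + 1 := by push_cast; ring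
        rw [e]
        exact step _ ih
    intro i
    rcases le_or_gt i L with h | h
    · exact base i h
    · have e : L + (((i - L).toNat : ℤ)) = i := by omega
      have := hn (i - L).toNat
      rwa [e] at this
  -- lower bound
  obtain ⟨is, his⟩ : ∃ i, Y t i = ⨆ i, Y t i := by
    have h := (Set.range_nonempty (Y t)).csSup_mem hYfin
    obtain ⟨i, hi⟩ := h
    exact ⟨i, hi⟩
  have hge : 1 + (⨆ i, Y t i) ≤ X t (is + 1) := by
    have h4 := f4 is (by rw [his]; exact hM0)
    have h5 := f3 is
    have h6 := hY' is
    have h7 := hsplitC is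
    have h8 := hX' (is + 1)
    linarith [his]
  refine le_antisymm (ciSup_le key) ?_
  calc 1 + ⨆ i, Y t i ≤ X t (is + 1) := hge
    _ ≤ ⨆ i, X t i := le_ciSup hXbdd _
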